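/- Let n ≥ 4 and let μ be a positive integer with μ mod 27 = 17. Define f : ZMod(3^n) → ZMod(3^n) by f(x) = μ·x·(x+1). Then the maximum over all x₀ ∈ ZMod(3^n) of the minimal period of x₀ under f equals 2·3^{n−4}. -/

import Mathlib

set_option maxRecDepth 10000

namespace LogisticMu17Aux

/-- integer logistic map -/
def Fc (c x : ℤ) : ℤ := c * x * (x + 1)

/-- two steps -/
def gc (c : ℤ) : ℤ → ℤ := fun x => Fc c (Fc c x)

lemma gc_iter (c : ℤ) (k : ℕ) : (gc c)^[k] = (Fc c)^[2*k] := by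
  have h2 : (Fc c)^[2] = gc c := by
    funext x
    simp [gc, Function.iterate_succ_apply', Function.iterate_zero]
  rw [Function.iterate_mul, h2]

lemma dvd_F (c z : ℤ) (e : ℕ) (hz : (3:ℤ)^e ∣ z) : (3:ℤ)^e ∣ Fc c z := by
  unfold Fc
  exact ((hz.mul_left c).mul_right (z+1))

lemma dvd_gc_iter (c z : ℤ) (e k : ℕ) (hz : (3:ℤ)^e ∣ z) : (3:ℤ)^e ∣ (gc c)^[k] z := by
  induction k with
  | zero => simpa using hz
  | succ k ih =>
    rw [Function.iterate_succ_apply']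
    exact dvd_F _ _ _ (dvd_F _ _ _ ih)

lemma taylor (c z d : ℤ) :
    gc c (z + d) = gc c z + d * (c^2*(2*z+1)*(2*Fc c z+1))
      + d^2 * (c^2*(2*Fc c z+1) + c*(c*(2*z+1+d))^2) := by
  unfold gc Fc; ring

lemma Dv_sub_one (c z : ℤ) (e : ℕ) (hc : (3:ℤ)^e ∣ c^2 - 1) (hz : (3:ℤ)^e ∣ z) :
    (3:ℤ)^e ∣ c^2*(2*z+1)*(2*Fc c z+1) - 1 := by
  have hw : (3:ℤ)^e ∣ Fc c z := dvd_F c z e hz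
  have key : c^2*(2*z+1)*(2*Fc c z+1) - 1
      = (c^2-1)*((2*z+1)*(2*Fc c z+1)) + z*(4*Fc c z+2) + (Fc c z)*2 := by ring
  rw [key]
  exact dvd_add (dvd_add (hc.mul_right _) (hz.mul_right _)) (hw.mul_right _)

/-- the key Taylor/derivative control for iterates of `gc`. -/
lemma Dgen (c : ℤ) (e a : ℕ) (hea : e ≤ a) (hc2 : (3:ℤ)^e ∣ c^2 - 1)
    (k : ℕ) (z h : ℤ) (hz : (3:ℤ)^e ∣ z) (hh : (3:ℤ)^a ∣ h) :
    ∃ u : ℤ, (3:ℤ)^e ∣ u - 1 ∧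
      (3:ℤ)^(a+e) ∣ ((gc c)^[k] (z+h) - (gc c)^[k] z - h * u) := by
  induction k with
  | zero => exact ⟨1, by simp, by simp⟩
  | succ k ih =>
    obtain ⟨u, hu1, hu2⟩ := ih
    set y := (gc c)^[k] z with hy
    have hy3 : (3:ℤ)^e ∣ y := dvd_gc_iter c z e k hz
    obtain ⟨t, ht⟩ := hu2
    have hstep : (gc c)^[k] (z+h) = y + (h*u + 3^(a+e)*t) := by
      have : (gc c)^[k] (z+h) - y - h*u = 3^(a+e)*t := ht
      linarith
    set d := h*u + 3^(a+e)*t with hd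
    have hdvd_d : (3:ℤ)^a ∣ d := by
      apply dvd_add (hh.mul_right u)
      exact Dvd.dvd.mul_right (pow_dvd_pow 3 (Nat.le_add_right a e)) t
    refine ⟨u * (c^2*(2*y+1)*(2*Fc c y+1)), ?_, ?_⟩
    · have hDv := Dv_sub_one c y e hc2 hy3
      have : u * (c^2*(2*y+1)*(2*Fc c y+1)) - 1
          = (u-1)*(c^2*(2*y+1)*(2*Fc c y+1)) + (c^2*(2*y+1)*(2*Fc c y+1) - 1) := by ring
      rw [this]
      exact dvd_add (hu1.mul_right _) hDv
    · rw [Function.iterate_succ_apply', Function.iterate_succ_apply', hstep, ← hy]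
      rw [show y + (h * u + 3 ^ (a + e) * t) = y + d from rfl]
      rw [taylor]
      have expand : gc c y + d * (c^2*(2*y+1)*(2*Fc c y+1))
            + d^2 * (c^2*(2*Fc c y+1) + c*(c*(2*y+1+d))^2)
            - gc c y - h * (u * (c^2*(2*y+1)*(2*Fc c y+1)))
          = 3^(a+e)*t * (c^2*(2*y+1)*(2*Fc c y+1))
            + d^2 * (c^2*(2*Fc c y+1) + c*(c*(2*y+1+d))^2) := by
        rw [hd]; ring
      rw [expand]
      apply dvd_add
      · exact (Dvd.dvd.mul_right (dvd_refl _) t).mul_right _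
      · apply Dvd.dvd.mul_right
        have : (3:ℤ)^(a+a) ∣ d^2 := by
          rw [pow_add, sq]
          exact mul_dvd_mul hdvd_d hdvd_d
        exact (pow_dvd_pow 3 (by omega)).trans this

lemma base81 : ∀ m x : ZMod 81, (m = 17 ∨ m = 44 ∨ m = 71) →
    m*(m*(3*x)*(3*x+1))*(m*(3*x)*(3*x+1)+1) = 3*x := by decide


lemma base243 : ∀ m : ZMod 243,
    (m = 17 ∨ m = 44 ∨ m = 71 ∨ m = 98 ∨ m = 125 ∨ m = 152 ∨ m = 179 ∨ m = 206 ∨ m = 233) →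
    m*(m*9*(9+1))*(m*9*(9+1)+1) ≠ 9 := by decide


lemma hc2_of (c : ℤ) (e : ℕ) (he : e ≤ 2) (hc : c % 27 = 17) : (3:ℤ)^e ∣ c^2 - 1 := by
  have h9 : (9:ℤ) ∣ c + 1 := by omega
  have h1 : (9:ℤ) ∣ c^2 - 1 := by
    have : c^2 - 1 = (c+1)*(c-1) := by ring
    rw [this]; exact h9.mul_right _
  calc (3:ℤ)^e ∣ (3:ℤ)^2 := pow_dvd_pow 3 he
    _ ∣ c^2 - 1 := by norm_num at h1 ⊢; exact h1


lemma upperA (c : ℤ) (hc : c % 27 = 17) :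
    ∀ n, 4 ≤ n → ∀ z : ℤ, 3 ∣ z → (3:ℤ)^n ∣ ((gc c)^[3^(n-4)] z - z) := by
  intro n hn
  induction n, hn using Nat.le_induction with
  | base =>
    intro z hz
    obtain ⟨w, rfl⟩ := hz
    have hcast : ((gc c (3*w) - 3*w : ℤ) : ZMod 81) = 0 := by
      have h81 : (c : ZMod 81) = 17 ∨ (c : ZMod 81) = 44 ∨ (c : ZMod 81) = 71 := by
        have h81' : c % 81 = 17 ∨ c % 81 = 44 ∨ c % 81 = 71 := by omega
        have hd : (81:ℤ) ∣ c - c % 81 := by omega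
        have h0 : ((c - c % 81 : ℤ) : ZMod 81) = 0 := by
          rw [ZMod.intCast_zmod_eq_zero_iff_dvd]; exact_mod_cast hd
        have hcc : (c : ZMod 81) = ((c % 81 : ℤ) : ZMod 81) := by
          rw [← sub_eq_zero]; push_cast at h0 ⊢; linear_combination h0
        rcases h81' with h | h | h <;> rw [hcc, h] <;> norm_num
      have := base81 (c : ZMod 81) (w : ZMod 81) h81
      unfold gc Fc
      push_cast
      linear_combination this
    rw [show (3:ℕ)^(4-4) = 1 from rfl, Function.iterate_one]
    have := (ZMod.intCast_zmod_eq_zero_iff_dvd _ 81).mp hcast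
    exact_mod_cast this
  | succ n hn ih =>
    intro z hz
    set k := 3^(n-4) with hk
    have hiter : (3:ℕ)^(n+1-4) = k*3 := by
      rw [hk, ← pow_succ]; congr 1; omega
    rw [hiter, show k*3 = k + (k + k) by ring, Function.iterate_add_apply,
      Function.iterate_add_apply]
    obtain ⟨γ, hγ⟩ := ih z hz
    have hzh : (gc c)^[k] z = z + 3^n*γ := by linarith
    have he1 : (3:ℤ)^1 ∣ c^2 - 1 := hc2_of c 1 (by norm_num) hc
    have hz1 : (3:ℤ)^1 ∣ z := by simpa using hz
    obtain ⟨u₁, hu₁, hd₁⟩ := Dgen c 1 n (by omega) he1 k z (3^n*γ) hz1 ⟨γ, rfl⟩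
    obtain ⟨α, hα⟩ := hu₁
    have hu1e : u₁ = 1 + 3*α := by simp at hα; linarith
    subst hu1e
    rw [hzh] at hd₁
    obtain ⟨t₁, ht₁⟩ := hd₁
    rw [show ((3:ℤ))^(n+1) = 3^n*3 from pow_succ 3 n] at ht₁
    have hd2' : (3:ℤ)^n ∣ (gc c)^[k] (z + 3^n*γ) - z := by
      refine ⟨γ*(2+3*α) + 3*t₁, ?_⟩
      linear_combination ht₁
    obtain ⟨u₂, hu₂, hd₂⟩ := Dgen c 1 n (by omega) he1 k z ((gc c)^[k] (z + 3^n*γ) - z) hz1 hd2'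
    obtain ⟨β, hβ⟩ := hu₂
    have hu2e : u₂ = 1 + 3*β := by simp at hβ; linarith
    subst hu2e
    rw [show z + ((gc c)^[k] (z + 3^n*γ) - z) = (gc c)^[k] (z + 3^n*γ) by ring, hzh] at hd₂
    obtain ⟨t₂, ht₂⟩ := hd₂
    rw [show ((3:ℤ))^(n+1) = 3^n*3 from pow_succ 3 n] at ht₂
    rw [hzh, show ((3:ℤ))^(n+1) = 3^n*3 from pow_succ 3 n]
    refine ⟨γ*(1+α+2*β+3*α*β) + t₂ + t₁*(1+3*β), ?_⟩
    linear_combination ht₂ + (1+3*β)*ht₁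

lemma lowerB (c : ℤ) (hc : c % 27 = 17) :
    ∀ n, 5 ≤ n → ¬ (3:ℤ)^n ∣ ((gc c)^[3^(n-5)] 9 - 9) := by
  intro n hn
  induction n, hn using Nat.le_induction with
  | base =>
    rw [show (3:ℕ)^(5-5) = 1 from rfl, Function.iterate_one]
    intro hdvd
    have hcast : ((gc c 9 - 9 : ℤ) : ZMod 243) = 0 := by
      rw [ZMod.intCast_zmod_eq_zero_iff_dvd]
      exact_mod_cast hdvd
    have h243 : (c : ZMod 243) = 17 ∨ (c : ZMod 243) = 44 ∨ (c : ZMod 243) = 71 ∨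
        (c : ZMod 243) = 98 ∨ (c : ZMod 243) = 125 ∨ (c : ZMod 243) = 152 ∨
        (c : ZMod 243) = 179 ∨ (c : ZMod 243) = 206 ∨ (c : ZMod 243) = 233 := by
      have h' : c % 243 = 17 ∨ c % 243 = 44 ∨ c % 243 = 71 ∨ c % 243 = 98 ∨ c % 243 = 125 ∨
          c % 243 = 152 ∨ c % 243 = 179 ∨ c % 243 = 206 ∨ c % 243 = 233 := by omega
      have hd : (243:ℤ) ∣ c - c % 243 := by omega
      have h0 : ((c - c % 243 : ℤ) : ZMod 243) = 0 := by
        rw [ZMod.intCast_zmod_eq_zero_iff_dvd]; exact_mod_cast hd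
      have hcc : (c : ZMod 243) = ((c % 243 : ℤ) : ZMod 243) := by
        rw [← sub_eq_zero]; push_cast at h0 ⊢; linear_combination h0
      rcases h' with h|h|h|h|h|h|h|h|h <;> rw [hcc, h] <;> norm_num
    apply base243 (c : ZMod 243) h243
    unfold gc Fc at hcast
    push_cast at hcast
    linear_combination hcast
  | succ n hn ih =>
    intro hdvd
    apply ih
    set k := 3^(n-5) with hk
    have hA : (3:ℤ)^(n-1) ∣ ((gc c)^[k] 9 - 9) := by
      have := upperA c hc (n-1) (by omega) 9 (by norm_num)
      rwa [show (n-1)-4 = n-5 by omega, ← hk] at this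
    obtain ⟨γ, hγ⟩ := hA
    -- goal : 3^n ∣ gc^[k] 9 - 9 ; suffices 3 ∣ γ
    suffices hsuff : (3:ℤ) ∣ γ by
      obtain ⟨g', rfl⟩ := hsuff
      rw [hγ]
      refine ⟨g', ?_⟩
      rw [show ((3:ℤ))^n = 3^(n-1)*3 by rw [← pow_succ]; congr 1; omega]
      ring
    -- use the 3-fold iterate
    have hiter : (3:ℕ)^(n+1-5) = k*3 := by
      rw [hk, ← pow_succ]; congr 1; omega
    rw [hiter, show k*3 = k + (k + k) by ring, Function.iterate_add_apply,
      Function.iterate_add_apply] at hdvd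
    have hzh : (gc c)^[k] (9:ℤ) = 9 + 3^(n-1)*γ := by linarith
    have he2 : (3:ℤ)^2 ∣ c^2 - 1 := hc2_of c 2 (by norm_num) hc
    have hz9 : (3:ℤ)^2 ∣ (9:ℤ) := by norm_num
    obtain ⟨u₁, hu₁, hd₁⟩ := Dgen c 2 (n-1) (by omega) he2 k 9 (3^(n-1)*γ) hz9 ⟨γ, rfl⟩
    obtain ⟨α, hα⟩ := hu₁
    have hu1e : u₁ = 1 + 9*α := by norm_num at hα; linarith
    subst hu1e
    rw [hzh] at hd₁
    obtain ⟨t₁, ht₁⟩ := hd₁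
    have hpow : ((3:ℤ))^(n-1+2) = 3^(n-1)*9 := by rw [pow_add]; norm_num
    rw [hpow] at ht₁
    have hd2' : (3:ℤ)^(n-1) ∣ (gc c)^[k] (9 + 3^(n-1)*γ) - 9 := by
      refine ⟨γ*(2+9*α) + 9*t₁, ?_⟩
      linear_combination ht₁
    obtain ⟨u₂, hu₂, hd₂⟩ := Dgen c 2 (n-1) (by omega) he2 k 9
      ((gc c)^[k] (9 + 3^(n-1)*γ) - 9) hz9 hd2'
    obtain ⟨β, hβ⟩ := hu₂
    have hu2e : u₂ = 1 + 9*β := by norm_num at hβ; linarith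
    subst hu2e
    rw [show (9:ℤ) + ((gc c)^[k] (9 + 3^(n-1)*γ) - 9) = (gc c)^[k] (9 + 3^(n-1)*γ) by ring,
      hzh] at hd₂
    obtain ⟨t₂, ht₂⟩ := hd₂
    rw [hpow] at ht₂
    rw [hzh] at hdvd
    obtain ⟨w, hw⟩ := hdvd
    rw [show ((3:ℤ))^(n+1) = 3^(n-1)*9 by rw [show n+1 = (n-1)+2 by omega, pow_add]; norm_num] at hw
    have hne' : ((3:ℤ))^(n-1)*3 ≠ 0 := by positivity
    have hkey : γ * (1 + 3*(α + 2*β + 9*α*β)) = 3*(w - t₂ - (1+9*β)*t₁) := by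
      apply mul_left_cancel₀ hne'
      have lhs : (3:ℤ)^(n-1) * (3 * (γ * (1 + 3*(α + 2*β + 9*α*β)))) =
          (gc c)^[k] ((gc c)^[k] (9 + 3^(n-1)*γ)) - 9 - 3^(n-1)*9*(t₂ + (1+9*β)*t₁) := by
        linear_combination -ht₂ - (1+9*β)*ht₁
      linear_combination lhs + hw
    have h3v : (3:ℤ) ∣ γ * (1 + 3*(α + 2*β + 9*α*β)) := ⟨_, hkey⟩
    rcases Int.prime_three.dvd_mul.mp h3v with h3γ | h3v'
    · exact h3γ
    · exfalso
      set M := α + 2*β + 9*α*β with hM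
      obtain ⟨q, hq⟩ := h3v'
      omega

lemma alt27_step (c x : ℤ) (hc : c % 27 = 17) :
    (x % 27 = 9 → (Fc c x) % 27 = 18) ∧ (x % 27 = 18 → (Fc c x) % 27 = 9) := by
  constructor <;> intro hx
  · have h1 : x ≡ 9 [ZMOD 27] := by unfold Int.ModEq; omega
    have h2 : c ≡ 17 [ZMOD 27] := by unfold Int.ModEq; omega
    have h3 : Fc c x ≡ 17*9*(9+1) [ZMOD 27] := (h2.mul h1).mul (h1.add_right 1)
    have h4 : Fc c x ≡ 18 [ZMOD 27] := h3.trans (by decide)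
    unfold Int.ModEq at h4; omega
  · have h1 : x ≡ 18 [ZMOD 27] := by unfold Int.ModEq; omega
    have h2 : c ≡ 17 [ZMOD 27] := by unfold Int.ModEq; omega
    have h3 : Fc c x ≡ 17*18*(18+1) [ZMOD 27] := (h2.mul h1).mul (h1.add_right 1)
    have h4 : Fc c x ≡ 9 [ZMOD 27] := h3.trans (by decide)
    unfold Int.ModEq at h4; omega

lemma alt27 (c : ℤ) (hc : c % 27 = 17) (j : ℕ) : ((Fc c)^[2*j+1] 9) % 27 = 18 := by
  induction j with
  | zero =>
    simpa using (alt27_step c 9 hc).1 (by norm_num)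
  | succ j ih =>
    have h2 : 2*(j+1)+1 = 2 + (2*j+1) := by ring
    rw [h2, Function.iterate_add_apply]
    have hy := (alt27_step c _ hc).2 ih
    have : (Fc c)^[2] ((Fc c)^[2*j+1] 9) = Fc c (Fc c ((Fc c)^[2*j+1] 9)) := by
      simp [Function.iterate_succ_apply', Function.iterate_zero]
    rw [this]
    exact (alt27_step c _ hc).1 hy

lemma one_mod3_F (c x : ℤ) (hc3 : c % 3 = 2) (hx : x % 3 = 1) : (Fc c x) % 3 = 1 := by
  have h1 : x ≡ 1 [ZMOD 3] := by unfold Int.ModEq; omega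
  have h2 : c ≡ 2 [ZMOD 3] := by unfold Int.ModEq; omega
  have h3 : Fc c x ≡ 2*1*(1+1) [ZMOD 3] := (h2.mul h1).mul (h1.add_right 1)
  have h4 : Fc c x ≡ 1 [ZMOD 3] := h3.trans (by decide)
  unfold Int.ModEq at h4; omega

lemma one_mod3_iter (c x : ℤ) (hc3 : c % 3 = 2) (hx : x % 3 = 1) (m : ℕ) :
    ((Fc c)^[m] x) % 3 = 1 := by
  induction m with
  | zero => simpa using hx
  | succ m ih => rw [Function.iterate_succ_apply']; exact one_mod3_F c _ hc3 ih

lemma contr (c : ℤ) (hc3 : c % 3 = 2) (z w : ℤ) (hz : z % 3 = 1) (hw : w % 3 = 1) :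
    ∀ m : ℕ, (3:ℤ)^m ∣ ((Fc c)^[m] z - (Fc c)^[m] w) := by
  intro m
  induction m with
  | zero => simp
  | succ m ih =>
    rw [Function.iterate_succ_apply', Function.iterate_succ_apply']
    set a := (Fc c)^[m] z with ha
    set b := (Fc c)^[m] w with hb
    have ha3 : a % 3 = 1 := one_mod3_iter c z hc3 hz m
    have hb3 : b % 3 = 1 := one_mod3_iter c w hc3 hw m
    have hsum : (3:ℤ) ∣ a + b + 1 := by omega
    have hident : Fc c a - Fc c b = (a - b) * ((a + b + 1) * c) := by unfold Fc; ring
    rw [hident, pow_succ]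
    exact mul_dvd_mul ih (hsum.mul_right c)

lemma div_lemma {p e : ℕ} (h : p ∣ 2*3^e) (hne : p ≠ 2*3^e) :
    p ∣ 3^e ∨ (1 ≤ e ∧ p ∣ 2*3^(e-1)) := by
  by_cases h2 : 2 ∣ p
  · obtain ⟨q, rfl⟩ := h2
    have hq : q ∣ 3^e := (mul_dvd_mul_iff_left (two_ne_zero)).mp h
    obtain ⟨i, hie, rfl⟩ := (Nat.dvd_prime_pow Nat.prime_three).mp hq
    have hlt : i < e := by
      rcases Nat.lt_or_ge i e with h' | h'
      · exact h'
      · exfalso; exact hne (by rw [show i = e by omega])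
    right
    exact ⟨by omega, mul_dvd_mul_left 2 (pow_dvd_pow 3 (by omega))⟩
  · left
    have hcop : Nat.Coprime p 2 := ((Nat.prime_two.coprime_iff_not_dvd).mpr h2).symm
    exact hcop.dvd_of_dvd_mul_left h


end LogisticMu17Aux

open LogisticMu17Aux

/-- Corollary 1 (case `μ ≡ 17 mod 27`): for `n ≥ 4` and a positive integer `μ`
with `μ mod 27 = 17`, the maximum over all `x₀ ∈ ZMod (3^n)` of the minimal
period of `x₀` under `f(x) = μ·x·(x+1)` equals `2·3^{n−4}`. -/
theorem logistic_maxPeriod_mu_seventeen (n : ℕ) (hn : 4 ≤ n) (μ : ℕ) (hμ : 0 < μ)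
    (hμ27 : μ % 27 = 17) :
    Finset.univ.sup
        (fun x₀ : ZMod (3 ^ n) =>
          Function.minimalPeriod
            (fun x : ZMod (3 ^ n) => (μ : ZMod (3 ^ n)) * x * (x + 1)) x₀) =
      2 * 3 ^ (n - 4) := by
  haveI : NeZero (3^n) := ⟨pow_ne_zero n (by norm_num)⟩
  set c : ℤ := (μ : ℤ) with hcdef
  have hc : c % 27 = 17 := by
    have h1 : ((μ % 27 : ℕ) : ℤ) = ((17 : ℕ) : ℤ) := by rw [hμ27]
    push_cast at h1
    omega
  set f := (fun x : ZMod (3 ^ n) => (μ : ZMod (3 ^ n)) * x * (x + 1)) with hf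
  set L := 2 * 3 ^ (n - 4) with hL
  have hLpos : 0 < L := by positivity
  -- bridge between integer iterates and ZMod iterates
  have bridge : ∀ (k : ℕ) (z : ℤ),
      (((Fc c)^[k] z : ℤ) : ZMod (3^n)) = f^[k] ((z : ZMod (3^n))) := by
    intro k
    induction k with
    | zero => intro z; simp
    | succ k ih =>
      intro z
      rw [Function.iterate_succ_apply', Function.iterate_succ_apply', ← ih]
      show (((Fc c ((Fc c)^[k] z)) : ℤ) : ZMod (3^n)) = _
      unfold Fc
      rw [hf, hcdef]
      push_cast
      ring
  -- fixed-point property for all multiples of 3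
  have hfix3 : ∀ z : ℤ, 3 ∣ z → f^[L] ((z : ℤ) : ZMod (3^n)) = ((z : ℤ) : ZMod (3^n)) := by
    intro z hz
    have hA := upperA c hc n hn z hz
    rw [gc_iter] at hA
    have hcast : (((Fc c)^[2*3^(n-4)] z - z : ℤ) : ZMod (3^n)) = 0 := by
      rw [ZMod.intCast_zmod_eq_zero_iff_dvd]
      push_cast
      exact hA
    rw [Int.cast_sub, sub_eq_zero, bridge] at hcast
    rw [hL]
    exact hcast
  -- cast equality to dvd
  have cast_dvd : ∀ (m : ℕ) (z w : ℤ),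
      f^[m] ((z : ℤ) : ZMod (3^n)) = ((w : ℤ) : ZMod (3^n)) →
      (3:ℤ)^n ∣ ((Fc c)^[m] z - w) := by
    intro m z w hm
    rw [← bridge] at hm
    have : (((Fc c)^[m] z - w : ℤ) : ZMod (3^n)) = 0 := by
      rw [Int.cast_sub, sub_eq_zero, hm]
    have := (ZMod.intCast_zmod_eq_zero_iff_dvd _ _).mp this
    push_cast at this
    exact this
  -- Part 1: every minimal period is ≤ L
  have part1 : ∀ x₀ : ZMod (3^n), Function.minimalPeriod f x₀ ≤ L := by
    intro x₀
    have hx₀ : ((x₀.val : ℤ) : ZMod (3^n)) = x₀ := by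
      push_cast
      exact ZMod.natCast_rightInverse x₀
    set a : ℤ := (x₀.val : ℤ) with hadef
    by_cases hper : x₀ ∈ Function.periodicPts f
    swap
    · rw [Function.minimalPeriod_eq_zero_of_notMem_periodicPts hper]; omega
    obtain ⟨p, hppos, hp⟩ := Function.mem_periodicPts.mp hper
    have hpe : f^[p] x₀ = x₀ := hp
    have hmain : f^[L] x₀ = x₀ := by
      rcases (by omega : a % 3 = 0 ∨ a % 3 = 1 ∨ a % 3 = 2) with h3 | h3 | h3
      · have := hfix3 a (by omega)
        rwa [hx₀] at this
      · -- contraction branch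
        have hFa : (Fc c a) % 3 = 1 := one_mod3_F c a (by omega) h3
        have hctr := contr c (by omega) (Fc c a) a hFa h3 n
        have hiter : (Fc c)^[n] (Fc c a) = (Fc c)^[n+1] a := (Function.iterate_succ_apply (Fc c) n a).symm
        rw [hiter] at hctr
        -- f^[n+1] x₀ = f^[n] x₀
        have hzm : f^[n+1] x₀ = f^[n] x₀ := by
          have h0 : (((Fc c)^[n+1] a - (Fc c)^[n] a : ℤ) : ZMod (3^n)) = 0 := by
            rw [ZMod.intCast_zmod_eq_zero_iff_dvd]; push_cast; exact hctr
          rw [Int.cast_sub, sub_eq_zero, bridge, bridge, hx₀] at h0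
          exact h0
        have hfx : f x₀ = x₀ := by
          have hN : f^[p*n] x₀ = x₀ := hp.mul_const n
          have hn1 : p*n ≥ n := Nat.le_mul_of_pos_left n hppos
          have step : f^[p*n + 1] x₀ = f^[p*n] x₀ := by
            have e1 : p*n + 1 = (p*n - n) + (n+1) := by omega
            have e2 : p*n = (p*n - n) + n := by omega
            rw [e1, Function.iterate_add_apply, hzm, ← Function.iterate_add_apply, ← e2]
          calc f x₀ = f (f^[p*n] x₀) := by rw [hN]
            _ = f^[p*n+1] x₀ := (Function.iterate_succ_apply' f (p*n) x₀).symm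
            _ = f^[p*n] x₀ := step
            _ = x₀ := hN
        exact Function.iterate_fixed hfx L
      · -- drops into multiples of 3 after one step
        have hFa : (3:ℤ) ∣ Fc c a := by
          have h31 : (3:ℤ) ∣ a + 1 := by omega
          exact (h31.mul_left (c * a))
        have h1 : f^[L] (f x₀) = f x₀ := by
          have := hfix3 (Fc c a) hFa
          have hb : ((Fc c a : ℤ) : ZMod (3^n)) = f x₀ := by
            have := bridge 1 a
            simpa [hx₀] using this
          rwa [hb] at this
        obtain ⟨q, rfl⟩ : ∃ q, p = q + 1 := ⟨p - 1, by omega⟩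
        calc f^[L] x₀ = f^[L] (f^[q+1] x₀) := by rw [hpe]
          _ = f^[L] (f^[q] (f x₀)) := by rw [Function.iterate_succ_apply]
          _ = f^[q] (f^[L] (f x₀)) := by
              rw [← Function.iterate_add_apply, Nat.add_comm, Function.iterate_add_apply]
          _ = f^[q] (f x₀) := by rw [h1]
          _ = f^[q+1] x₀ := by rw [Function.iterate_succ_apply]
          _ = x₀ := hpe
    exact Function.IsPeriodicPt.minimalPeriod_le hLpos hmain
  -- Part 2: the point 9 has minimal period exactly L
  have h9 : f^[L] (((9:ℤ)) : ZMod (3^n)) = (((9:ℤ)) : ZMod (3^n)) := hfix3 9 (by norm_num)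
  set x₉ : ZMod (3^n) := ((9:ℤ) : ZMod (3^n)) with hx9
  have hper9 : Function.IsPeriodicPt f L x₉ := h9
  have hppos : 0 < Function.minimalPeriod f x₉ := hper9.minimalPeriod_pos hLpos
  have hpdvd : Function.minimalPeriod f x₉ ∣ L := hper9.minimalPeriod_dvd
  have hexact : Function.minimalPeriod f x₉ = L := by
    by_contra hne
    rcases div_lemma (hL ▸ hpdvd) (by rw [← hL]; exact hne) with hcase | ⟨he, hcase⟩
    · -- odd period divides: contradiction with mod 27 alternation
      have hfixodd : Function.IsPeriodicPt f (3^(n-4)) x₉ :=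
        (Function.isPeriodicPt_minimalPeriod f x₉).trans_dvd hcase
      have hdvd : (3:ℤ)^n ∣ ((Fc c)^[3^(n-4)] 9 - 9) := cast_dvd _ 9 9 hfixodd
      have h27 : (27:ℤ) ∣ ((Fc c)^[3^(n-4)] 9 - 9) := by
        refine dvd_trans ?_ hdvd
        have : (27:ℤ) = 3^3 := by norm_num
        rw [this]
        exact pow_dvd_pow 3 (by omega)
      have hodd : (3:ℕ)^(n-4) % 2 = 1 := by
        rw [Nat.pow_mod]
        norm_num
      obtain ⟨j, hj⟩ : ∃ j, 3^(n-4) = 2*j+1 := ⟨3^(n-4)/2, by omega⟩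
      have := alt27 c hc j
      rw [← hj] at this
      omega
    · -- period divides 2*3^(n-5): contradiction with lowerB
      have hn5 : 5 ≤ n := by omega
      rw [show (n-4) - 1 = n - 5 by omega] at hcase
      have hfixsm : Function.IsPeriodicPt f (2*3^(n-5)) x₉ :=
        (Function.isPeriodicPt_minimalPeriod f x₉).trans_dvd hcase
      have hdvd : (3:ℤ)^n ∣ ((Fc c)^[2*3^(n-5)] 9 - 9) := cast_dvd _ 9 9 hfixsm
      rw [← gc_iter] at hdvd
      exact lowerB c hc n hn5 hdvd
  apply le_antisymm
  · exact Finset.sup_le (fun x _ => part1 x)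
  · calc L = Function.minimalPeriod f x₉ := hexact.symm
      _ ≤ _ := Finset.le_sup (Finset.mem_univ x₉)
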